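/- arXiv:1812.01340 — 2 statements merged into one kernel-verified Lean document; each statement's English description precedes it below -/
import Mathlib

section
/- For every integer k ≥ 1 and every i ≥ 1, the square [y, x, …(i copies of x)…, x]^2 of the left-normed commutator lies in [H_k, H_k] ∩ γ_(2i+1)(G_k); moreover [y, x, …(i copies of x)…, x]^2 is congruent to [y, x, …(2i−1 copies of x)…, x, y] modulo γ_(2i+2)(G_k). -/
open Subgroup
open scoped commutatorElement

namespace P2G

/-- The commutator `[a,b] = a⁻¹ b⁻¹ a b` (left-normed convention of the paper). -/
def comm {M : Type*} [Group M] (a b : M) : M := a⁻¹ * b⁻¹ * a * b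

def X : FreeGroup (Fin 2) := FreeGroup.of 0
def Y : FreeGroup (Fin 2) := FreeGroup.of 1

/-- `y_j = x^(-j) y x^j` in the free group. -/
def yF (j : ℤ) : FreeGroup (Fin 2) := X ^ (-j) * Y * X ^ j

/-- Relations for `G_k`:
`x^(2^(k+1)) = y^4 = [x^(2^k), y] = [y^2, x] = 1` and
`[y_0,y_i]^2 = [y_0,y_i,x] = [y_0,y_i,y] = 1` for `1 ≤ i ≤ 2^(k-1)`. -/
def rels (k : ℕ) : Set (FreeGroup (Fin 2)) :=
  {X ^ 2 ^ (k + 1), Y ^ 4, comm (X ^ 2 ^ k) Y, comm (Y ^ 2) X} ∪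
    ⋃ i ∈ Set.Icc 1 (2 ^ (k - 1)),
      {comm (yF 0) (yF i) ^ 2, comm (comm (yF 0) (yF i)) X, comm (comm (yF 0) (yF i)) Y}

/-- The group `G_k`, given by the above presentation. -/
abbrev G (k : ℕ) := PresentedGroup (rels k)

/-- The generator `x` of `G_k`. -/
def x (k : ℕ) : G k := PresentedGroup.of 0

/-- The generator `y` of `G_k`. -/
def y (k : ℕ) : G k := PresentedGroup.of 1

/-- `y_j = x^(-j) y x^j` in `G_k`. -/
def yg (k : ℕ) (j : ℤ) : G k := x k ^ (-j) * y k * x k ^ j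

/-- `H_k`, the normal closure of `y` in `G_k`. -/
def Hsub (k : ℕ) : Subgroup (G k) := Subgroup.normalClosure {y k}

/-- `Z_k`, the normal closure in `G_k` of `{x^(2^k), y^2} ∪ {[y_0,y_i] : 1 ≤ i ≤ 2^(k-1)}`. -/
def Zsub (k : ℕ) : Subgroup (G k) :=
  Subgroup.normalClosure ({x k ^ 2 ^ k, y k ^ 2} ∪
    {g | ∃ i : ℕ, 1 ≤ i ∧ i ≤ 2 ^ (k - 1) ∧ g = comm (yg k 0) (yg k i)})

/-- `G_k^(2^j)`, the subgroup generated by all `2^j`-th powers of elements of `G_k`. -/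
def pow2 (k j : ℕ) : Subgroup (G k) := Subgroup.closure (Set.range fun g : G k => g ^ 2 ^ j)

/-- `w = y_(2^k − 1) y_(2^k − 2) ⋯ y_1 y_0` in `G_k`. -/
def w (k : ℕ) : G k := (((List.range (2 ^ k)).reverse).map fun j => yg k j).prod

/-- The left-normed commutator `c k i = [y, x, …(i copies of x)…, x]`; `c k 0 = y`. -/
def c (k : ℕ) : ℕ → G k
  | 0 => y k
  | i + 1 => comm (c k i) (x k)

/-- `γ_m(G_k)`, the `m`-th term of the lower central series (`γ_1 = G_k`). -/
abbrev gamma (k m : ℕ) : Subgroup (G k) := (⊤ : Subgroup (G k)).lowerCentralSeries (m - 1)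

section Basics
variable {M : Type*} [Group M]

lemma comm_def (a b : M) : comm a b = a⁻¹ * b⁻¹ * a * b := rfl

lemma comm_eq_commutatorElement (a b : M) : comm a b = ⁅a⁻¹, b⁻¹⁆ := by
  simp [comm, commutatorElement_def]

lemma map_comm {N : Type*} [Group N] (f : M →* N) (a b : M) :
    f (comm a b) = comm (f a) (f b) := by simp [comm]

lemma comm_eq_one_iff {a b : M} : comm a b = 1 ↔ Commute a b := by
  rw [comm_eq_commutatorElement, commutatorElement_eq_one_iff_commute]
  exact ⟨fun h => by simpa using h.inv_inv, fun h => h.inv_inv⟩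

lemma conj_comm' (g a b : M) : g⁻¹ * comm a b * g = comm (g⁻¹*a*g) (g⁻¹*b*g) := by
  simp only [comm]; group

lemma comm_self (a : M) : comm a a = 1 := by simp only [comm]; group

lemma comm_inv_eq (a b : M) : (comm a b)⁻¹ = comm b a := by simp only [comm]; group

lemma commutatorElement_eq_conj_comm (u v : M) :
    ⁅u, v⁆ = (v*u) * comm u v * (v*u)⁻¹ := by simp only [comm, commutatorElement_def]; group

end Basics
section Rels
variable {k : ℕ}

/-- the canonical hom from the free group -/
abbrev F (k : ℕ) : FreeGroup (Fin 2) →* G k := PresentedGroup.mk (rels k)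

lemma F_X : F k X = x k := rfl
lemma F_Y : F k Y = y k := rfl

lemma rel_one {r : FreeGroup (Fin 2)} (h : r ∈ rels k) : F k r = 1 :=
  (QuotientGroup.eq_one_iff r).2 (Subgroup.subset_normalClosure h)

lemma F_yF (j : ℤ) : F k (yF j) = yg k j := by
  simp [yF, yg, map_zpow, F_X, F_Y]

lemma hx2k1 : (x k) ^ 2 ^ (k+1) = 1 := by
  have := rel_one (k := k) (r := X ^ 2 ^ (k+1)) (Set.mem_union_left _ (by simp))
  simpa [map_pow, F_X] using this

lemma hy4 : (y k) ^ 4 = 1 := by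
  have := rel_one (k := k) (r := Y ^ 4) (Set.mem_union_left _ (by simp))
  simpa [map_pow, F_Y] using this

lemma hcxy : comm ((x k) ^ 2 ^ k) (y k) = 1 := by
  have := rel_one (k := k) (r := comm (X ^ 2 ^ k) Y) (Set.mem_union_left _ (by simp))
  simpa [map_comm, map_pow, F_X, F_Y] using this

lemma hcyx : comm ((y k) ^ 2) (x k) = 1 := by
  have := rel_one (k := k) (r := comm (Y ^ 2) X) (Set.mem_union_left _ (by simp))
  simpa [map_comm, map_pow, F_X, F_Y] using this

lemma hrel3 {i : ℕ} (h1 : 1 ≤ i) (h2 : i ≤ 2 ^ (k-1)) :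
    comm (yg k 0) (yg k i) ^ 2 = 1 ∧ comm (comm (yg k 0) (yg k i)) (x k) = 1 ∧
      comm (comm (yg k 0) (yg k i)) (y k) = 1 := by
  have hIcc : (i : ℤ) ∈ Set.Icc 1 ((2:ℤ) ^ (k-1)) := by
    constructor <;> [exact_mod_cast h1; exact_mod_cast h2]
  have hmem : ∀ r ∈ ({comm (yF 0) (yF i) ^ 2, comm (comm (yF 0) (yF i)) X,
      comm (comm (yF 0) (yF i)) Y} : Set (FreeGroup (Fin 2))), r ∈ rels k := by
    intro r hr
    refine Set.mem_union_right _ (Set.mem_biUnion ?_ hr)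
    simpa using hIcc
  refine ⟨?_, ?_, ?_⟩
  · have := rel_one (hmem (comm (yF 0) (yF i) ^ 2) (by left; rfl))
    simpa [map_pow, map_comm, F_yF] using this
  · have := rel_one (hmem (comm (comm (yF 0) (yF i)) X) (by right; left; rfl))
    simpa [map_comm, F_yF, F_X] using this
  · have := rel_one (hmem (comm (comm (yF 0) (yF i)) Y) (by right; right; rfl))
    simpa [map_comm, F_yF, F_Y] using this

lemma commute_all {z : G k} (hx : Commute z (x k)) (hy : Commute z (y k)) (g : G k) :
    Commute z g := by
  have htop : g ∈ Subgroup.closure (Set.range (PresentedGroup.of :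
      Fin 2 → G k)) := by
    rw [PresentedGroup.closure_range_of]; trivial
  induction htop using Subgroup.closure_induction with
  | mem a ha => obtain ⟨i, rfl⟩ := ha; fin_cases i <;> assumption
  | one => exact Commute.one_right z
  | mul a b _ _ ha hb => exact ha.mul_right hb
  | inv a _ ha => exact ha.inv_right

end Rels
section W
variable {k : ℕ}

def Wsub (k : ℕ) : Subgroup (G k) where
  carrier := {z | (∀ g, Commute z g) ∧ z ^ 2 = 1}
  one_mem' := ⟨fun g => Commute.one_left g, one_pow 2⟩
  mul_mem' := by
    rintro a b ⟨ha, ha2⟩ ⟨hb, hb2⟩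
    exact ⟨fun g => (ha g).mul_left (hb g), by
      rw [(ha b).mul_pow, ha2, hb2, one_mul]⟩
  inv_mem' := by
    rintro a ⟨ha, ha2⟩
    exact ⟨fun g => (ha g).inv_left, by rw [inv_pow, ha2, inv_one]⟩

lemma Wcomm {z : G k} (h : z ∈ Wsub k) (g : G k) : Commute z g := h.1 g

lemma Wsq {z : G k} (h : z ∈ Wsub k) : z ^ 2 = 1 := h.2

lemma Winv {z : G k} (h : z ∈ Wsub k) : z⁻¹ = z := by
  have := h.2
  rw [pow_two] at this
  exact inv_eq_of_mul_eq_one_right this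

lemma Wconj {z : G k} (h : z ∈ Wsub k) (g : G k) : g⁻¹ * z * g = z := by
  rw [mul_assoc, (Wcomm h g).eq, ← mul_assoc, inv_mul_cancel, one_mul]

lemma memW {z : G k} (hx : Commute z (x k)) (hy : Commute z (y k)) (h2 : z ^ 2 = 1) :
    z ∈ Wsub k := ⟨fun g => commute_all hx hy g, h2⟩

lemma x2k_mem_W : (x k) ^ 2 ^ k ∈ Wsub k := by
  refine memW ((Commute.refl (x k)).pow_left _) ?_ ?_
  · exact comm_eq_one_iff.1 hcxy
  · rw [← pow_mul, ← pow_succ]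
    exact hx2k1

lemma y2_mem_W : (y k) ^ 2 ∈ Wsub k := by
  refine memW (comm_eq_one_iff.1 hcyx) ((Commute.refl (y k)).pow_left _) ?_
  rw [← pow_mul]
  exact hy4

lemma commY0i_mem_W {i : ℕ} (h1 : 1 ≤ i) (h2 : i ≤ 2 ^ (k-1)) :
    comm (yg k 0) (yg k i) ∈ Wsub k := by
  obtain ⟨hsq, hcx, hcy⟩ := hrel3 h1 h2
  exact memW (comm_eq_one_iff.1 hcx) (comm_eq_one_iff.1 hcy) hsq

end W
section YG
variable {k : ℕ}

lemma Wconj2 {z : G k} (h : z ∈ Wsub k) (a : G k) : z⁻¹ * a * z = a := by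
  rw [mul_assoc, ← (Wcomm h a).eq, ← mul_assoc, inv_mul_cancel, one_mul]

lemma yg_zero : yg k 0 = y k := by simp [yg]

lemma shift (a j : ℤ) : (x k) ^ (-a) * yg k j * (x k) ^ a = yg k (j + a) := by
  simp only [yg]; group

lemma xz_pow (q : ℤ) : (x k) ^ ((2:ℤ) ^ k * q) = ((x k) ^ (2:ℕ) ^ k) ^ q := by
  rw [← zpow_natCast (x k) (2 ^ k), ← zpow_mul]
  norm_num

lemma yg_period (j q : ℤ) : yg k (j + 2 ^ k * q) = yg k j := by
  have hz : ((x k) ^ (2:ℕ) ^ k) ^ q ∈ Wsub k := zpow_mem x2k_mem_W q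
  have h1 := shift (k := k) ((2:ℤ) ^ k * q) j
  rw [zpow_neg, xz_pow] at h1
  rw [← h1, Wconj2 hz]

lemma comm_yg_shift (a b : ℤ) :
    (x k) ^ (-a) * comm (yg k 0) (yg k (b - a)) * (x k) ^ a = comm (yg k a) (yg k b) := by
  have h := conj_comm' ((x k) ^ a) (yg k 0) (yg k (b - a))
  rw [← zpow_neg] at h
  rw [h, shift, shift]
  norm_num

lemma commW_yg0 (hk : 1 ≤ k) (m : ℤ) : comm (yg k 0) (yg k m) ∈ Wsub k := by
  have h2k : (0:ℤ) < 2 ^ k := by positivity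
  set r := m % 2 ^ k with hr
  have hyr : yg k m = yg k r := by
    have : m = r + 2 ^ k * (m / 2 ^ k) := by rw [hr]; rw [Int.emod_add_mul_ediv]
    rw [this, yg_period]
  rw [hyr]
  have hr0 : 0 ≤ r := Int.emod_nonneg m (by positivity)
  have hrlt : r < 2 ^ k := Int.emod_lt_of_pos m h2k
  rcases eq_or_lt_of_le hr0 with h0 | hpos
  · rw [← h0, comm_self]; exact one_mem _
  rcases le_or_gt r (2 ^ (k-1)) with hle | hgt
  · -- 1 ≤ r ≤ 2^(k-1) : use the relation
    have h1 : 1 ≤ r.toNat := by omega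
    have h2 : r.toNat ≤ 2 ^ (k-1) := by
      have : ((2:ℤ) ^ (k-1)) = ((2 ^ (k-1) : ℕ) : ℤ) := by push_cast; ring
      omega
    have := commY0i_mem_W (k := k) h1 h2
    rwa [show ((r.toNat : ℤ)) = r by omega] at this
  · -- 2^(k-1) < r < 2^k
    set i : ℤ := 2 ^ k - r with hi
    have hi1 : 1 ≤ i := by omega
    have hi2 : i ≤ 2 ^ (k-1) := by
      have hsplit : (2:ℤ) ^ k = 2 ^ (k-1) * 2 := by
        rw [← pow_succ]
        congr 1
        omega
      omega
    have hz : comm (yg k 0) (yg k i) ∈ Wsub k := by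
      have := commY0i_mem_W (k := k) (i := i.toNat) (by omega) (by
        have : ((2:ℤ) ^ (k-1)) = ((2 ^ (k-1) : ℕ) : ℤ) := by push_cast; ring
        omega)
      rwa [show ((i.toNat : ℤ)) = i by omega] at this
    have hz' : comm (yg k i) (yg k 0) ∈ Wsub k := by
      rw [← comm_inv_eq]; exact inv_mem hz
    -- yg r = yg (-i)
    have hyri : yg k r = yg k (-i) := by
      have : r = -i + 2 ^ k * 1 := by omega
      rw [this, yg_period]
    rw [hyri]
    -- comm (yg i) (yg 0) = x^(-i) * comm (yg 0) (yg (-i)) * x^i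
    have hs := comm_yg_shift (k := k) i 0
    rw [show (0:ℤ) - i = -i by ring] at hs
    have : comm (yg k 0) (yg k (-i)) =
        (x k) ^ i * comm (yg k i) (yg k 0) * ((x k) ^ i)⁻¹ := by
      rw [← hs]; group
    rw [this]
    have h9 := Wconj hz' (((x k) ^ i)⁻¹)
    rw [inv_inv] at h9
    rw [h9]
    exact hz'

lemma commW_yg (hk : 1 ≤ k) (a b : ℤ) : comm (yg k a) (yg k b) ∈ Wsub k := by
  have hW := commW_yg0 hk (b - a)
  rw [← comm_yg_shift, zpow_neg, Wconj hW]
  exact hW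

end YG
section Asec
variable {k : ℕ}

def Asub (k : ℕ) : Subgroup (G k) :=
  Subgroup.closure (Set.range (yg k) ∪ (Wsub k : Set (G k)))

lemma yg_mem_A (j : ℤ) : yg k j ∈ Asub k := Subgroup.subset_closure (Or.inl ⟨j, rfl⟩)
lemma W_le_A : Wsub k ≤ Asub k := fun _ hz => Subgroup.subset_closure (Or.inr hz)
lemma y_mem_A : y k ∈ Asub k := yg_zero ▸ yg_mem_A 0

lemma Wconj3 {z : G k} (h : z ∈ Wsub k) (g : G k) : g * z * g⁻¹ = z := by
  have := Wconj h g⁻¹; rwa [inv_inv] at this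

lemma shift1 (j : ℤ) : x k * yg k j * (x k)⁻¹ = yg k (j-1) := by
  have := shift (k := k) (-1) j
  simpa [sub_eq_add_neg] using this

lemma shift1' (j : ℤ) : (x k)⁻¹ * yg k j * x k = yg k (j+1) := by
  have := shift (k := k) 1 j
  simpa using this

lemma comm_yg_y_mem_W (hk : 1 ≤ k) (j : ℤ) : comm (yg k j) (y k) ∈ Wsub k := by
  rw [← yg_zero]; exact commW_yg hk j 0

lemma conj_y_yg (hk : 1 ≤ k) (j : ℤ) : (y k)⁻¹ * yg k j * y k ∈ Asub k := by
  have hid : (y k)⁻¹ * yg k j * y k = yg k j * comm (yg k j) (y k) := by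
    simp only [comm]; group
  rw [hid]
  exact mul_mem (yg_mem_A j) (W_le_A (comm_yg_y_mem_W hk j))

lemma conj_y'_yg (hk : 1 ≤ k) (j : ℤ) : y k * yg k j * (y k)⁻¹ ∈ Asub k := by
  have hz := comm_yg_y_mem_W hk j
  have hid : y k * yg k j * (y k)⁻¹ =
      yg k j * (y k * (comm (yg k j) (y k))⁻¹ * (y k)⁻¹) := by
    simp only [comm]; group
  rw [hid, Wconj3 (inv_mem hz)]
  exact mul_mem (yg_mem_A j) (W_le_A (inv_mem hz))

lemma conjA_gen {g : G k}
    (hg : ∀ s ∈ Set.range (yg k) ∪ (Wsub k : Set (G k)), g * s * g⁻¹ ∈ Asub k) :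
    ∀ n ∈ Asub k, g * n * g⁻¹ ∈ Asub k := by
  intro n hn
  induction hn using Subgroup.closure_induction with
  | mem s hs => exact hg s hs
  | one => simpa using one_mem _
  | mul a b _ _ iha ihb =>
      have h : g * (a*b) * g⁻¹ = (g*a*g⁻¹) * (g*b*g⁻¹) := by group
      rw [h]; exact mul_mem iha ihb
  | inv a _ iha =>
      have h : g * a⁻¹ * g⁻¹ = (g*a*g⁻¹)⁻¹ := by group
      rw [h]; exact inv_mem iha

lemma A_conj (hk : 1 ≤ k) (g : G k) :
    (∀ n ∈ Asub k, g * n * g⁻¹ ∈ Asub k) ∧ (∀ n ∈ Asub k, g⁻¹ * n * g ∈ Asub k) := by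
  have htop : g ∈ Subgroup.closure (Set.range (PresentedGroup.of : Fin 2 → G k)) := by
    rw [PresentedGroup.closure_range_of]; trivial
  induction htop using Subgroup.closure_induction with
  | mem a ha =>
      obtain ⟨i, rfl⟩ := ha
      fin_cases i
      · constructor
        · refine conjA_gen ?_
          rintro s (⟨j, rfl⟩ | hs)
          · show x k * yg k j * (x k)⁻¹ ∈ Asub k
            rw [shift1]
            exact yg_mem_A _
          · show x k * s * (x k)⁻¹ ∈ Asub k
            rw [Wconj3 hs]
            exact W_le_A hs
        · intro n hn
          show (x k)⁻¹ * n * x k ∈ Asub k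
          have := conjA_gen (g := (x k)⁻¹) ?_ n hn
          · simpa using this
          · rintro s (⟨j, rfl⟩ | hs)
            · rw [inv_inv, shift1']
              exact yg_mem_A _
            · rw [inv_inv, Wconj hs]
              exact W_le_A hs
      · constructor
        · intro n hn
          show y k * n * (y k)⁻¹ ∈ Asub k
          refine conjA_gen ?_ n hn
          rintro s (⟨j, rfl⟩ | hs)
          · exact conj_y'_yg hk j
          · rw [Wconj3 hs]
            exact W_le_A hs
        · intro n hn
          show (y k)⁻¹ * n * y k ∈ Asub k
          have := conjA_gen (g := (y k)⁻¹) ?_ n hn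
          · simpa using this
          · rintro s (⟨j, rfl⟩ | hs)
            · rw [inv_inv]
              exact conj_y_yg hk j
            · rw [inv_inv, Wconj hs]
              exact W_le_A hs
  | one => constructor <;> intro n hn <;> simpa using hn
  | mul a b _ _ iha ihb =>
      constructor
      · intro n hn
        have h : (a*b) * n * (a*b)⁻¹ = a * (b * n * b⁻¹) * a⁻¹ := by group
        rw [h]; exact iha.1 _ (ihb.1 n hn)
      · intro n hn
        have h : (a*b)⁻¹ * n * (a*b) = b⁻¹ * (a⁻¹ * n * a) * b := by group
        rw [h]; exact ihb.2 _ (iha.2 n hn)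
  | inv a _ iha =>
      constructor
      · intro n hn
        have h : a⁻¹ * n * (a⁻¹)⁻¹ = a⁻¹ * n * a := by rw [inv_inv]
        rw [h]; exact iha.2 n hn
      · intro n hn
        have h : (a⁻¹)⁻¹ * n * a⁻¹ = a * n * a⁻¹ := by rw [inv_inv]
        rw [h]; exact iha.1 n hn

lemma H_le_A (hk : 1 ≤ k) : Hsub k ≤ Asub k := by
  have : (Asub k).Normal := ⟨fun n hn g => (A_conj hk g).1 n hn⟩
  exact Subgroup.normalClosure_le_normal (Set.singleton_subset_iff.2 y_mem_A)

lemma commA_W (hk : 1 ≤ k) : ∀ u ∈ Asub k, ∀ v ∈ Asub k, ⁅u, v⁆ ∈ Wsub k := by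
  intro u hu v hv
  induction hu, hv using Subgroup.closure_induction₂ with
  | mem s t hs ht =>
      rcases hs with ⟨a, rfl⟩ | hs
      · rcases ht with ⟨b, rfl⟩ | ht
        · rw [commutatorElement_eq_conj_comm, Wconj3 (commW_yg hk a b)]
          exact commW_yg hk a b
        · rw [((Wcomm ht _).symm).commutator_eq]; exact one_mem _
      · rw [(Wcomm hs _).commutator_eq]; exact one_mem _
  | one_left v hv => rw [commutatorElement_one_left]; exact one_mem _
  | one_right v hv => rw [commutatorElement_one_right]; exact one_mem _
  | mul_left a b z ha hb hz iha ihb =>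
      have h : ⁅a*b, z⁆ = a * ⁅b,z⁆ * a⁻¹ * ⁅a,z⁆ := by
        simp only [commutatorElement_def]; group
      rw [h, Wconj3 ihb]
      exact mul_mem ihb iha
  | mul_right b z a hb hz ha ihb ihz =>
      have h : ⁅a, b*z⁆ = ⁅a,b⁆ * (b * ⁅a,z⁆ * b⁻¹) := by
        simp only [commutatorElement_def]; group
      rw [h, Wconj3 ihz]
      exact mul_mem ihb ihz
  | inv_left a b ha hb ih =>
      have h : ⁅a⁻¹, b⁆ = a⁻¹ * ⁅b,a⁆ * a := by
        simp only [commutatorElement_def]; group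
      have hW : ⁅b,a⁆ ∈ Wsub k := by rw [← commutatorElement_inv]; exact inv_mem ih
      rw [h, Wconj hW]
      exact hW
  | inv_right a b ha hb ih =>
      have h : ⁅a, b⁻¹⁆ = b⁻¹ * ⁅b,a⁆ * b := by
        simp only [commutatorElement_def]; group
      have hW : ⁅b,a⁆ ∈ Wsub k := by rw [← commutatorElement_inv]; exact inv_mem ih
      rw [h, Wconj hW]
      exact hW

lemma commH_W (hk : 1 ≤ k) {u v : G k} (hu : u ∈ Hsub k) (hv : v ∈ Hsub k) :
    comm u v ∈ Wsub k := by
  rw [comm_eq_commutatorElement]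
  exact commA_W hk _ (H_le_A hk (inv_mem hu)) _ (H_le_A hk (inv_mem hv))

lemma commH_mem_commutator {u v : G k} (hu : u ∈ Hsub k) (hv : v ∈ Hsub k) :
    comm u v ∈ ⁅Hsub k, Hsub k⁆ := by
  rw [comm_eq_commutatorElement]
  exact Subgroup.commutator_mem_commutator (inv_mem hu) (inv_mem hv)

end Asec
section Csec
variable {k : ℕ}

lemma c_succ (i : ℕ) : c k (i+1) = comm (c k i) (x k) := rfl

lemma cH : ∀ i, c k i ∈ Hsub k
  | 0 => Subgroup.subset_normalClosure (Set.mem_singleton _)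
  | (i+1) => by
      have hH := cH i
      have hnormal : (Hsub k).Normal := Subgroup.normalClosure_normal
      have hconj : (x k)⁻¹ * c k i * x k ∈ Hsub k := by
        have := hnormal.conj_mem _ hH (x k)⁻¹
        simpa using this
      have h : c k (i+1) = (c k i)⁻¹ * ((x k)⁻¹ * c k i * x k) := by
        rw [c_succ]; simp only [comm]; group
      rw [h]; exact mul_mem (inv_mem hH) hconj

lemma cL : ∀ i, c k i ∈ (⊤ : Subgroup (G k)).lowerCentralSeries i
  | 0 => Subgroup.mem_top _
  | (i+1) => by
      rw [c_succ, comm_eq_commutatorElement]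
      exact Subgroup.commutator_mem_commutator (inv_mem (cL i)) (Subgroup.mem_top _)

lemma sq_comm {a b : G k} (hc : Commute (a^2) b) :
    comm a b ^ 2 = (comm (comm a b) a)⁻¹ := by
  have hc' : a * a * b = b * (a * a) := by
    have := hc.eq
    rwa [pow_two] at this
  have h1 : comm a b * a * comm a b = a⁻¹ * (b⁻¹ * (a * a * b)) := by
    simp only [comm]; group
  have h2 : comm a b * a * comm a b = a := by
    rw [h1, hc']; group
  rw [pow_two]
  calc comm a b * comm a b
      = a⁻¹ * (comm a b)⁻¹ * (comm a b * a * comm a b) * comm a b := by group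
    _ = a⁻¹ * (comm a b)⁻¹ * a * comm a b := by rw [h2]
    _ = (comm (comm a b) a)⁻¹ := by simp only [comm]; group

lemma csq_step (hk : 1 ≤ k) {i : ℕ} (hc : Commute ((c k i)^2) (x k)) :
    c k (i+1) ^ 2 = comm (c k (i+1)) (c k i) ∧ c k (i+1) ^ 2 ∈ Wsub k := by
  have h := sq_comm hc
  rw [← c_succ] at h
  have hW : comm (c k (i+1)) (c k i) ∈ Wsub k := commH_W hk (cH (i+1)) (cH i)
  exact ⟨by rw [h, Winv hW], by rw [h]; exact inv_mem hW⟩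

lemma csq (hk : 1 ≤ k) : ∀ i, c k (i+1) ^ 2 = comm (c k (i+1)) (c k i) ∧
    c k (i+1) ^ 2 ∈ Wsub k := by
  intro i
  induction i with
  | zero => exact csq_step hk (show Commute ((y k)^2) (x k) from Wcomm y2_mem_W _)
  | succ n ih => exact csq_step hk (Wcomm ih.2 (x k))

lemma three_subgroups {H₁ H₂ H₃ N : Subgroup (G k)} [hN : N.Normal]
    (h1 : ⁅⁅H₂, H₃⁆, H₁⁆ ≤ N) (h2 : ⁅⁅H₃, H₁⁆, H₂⁆ ≤ N) : ⁅⁅H₁, H₂⁆, H₃⁆ ≤ N := by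
  have key : ∀ K : Subgroup (G k), K ≤ N ↔ K.map (QuotientGroup.mk' N) = ⊥ := by
    intro K
    rw [Subgroup.map_eq_bot_iff, QuotientGroup.ker_mk']
  rw [key] at h1 h2 ⊢
  rw [Subgroup.map_commutator, Subgroup.map_commutator] at h1 h2 ⊢
  exact Subgroup.commutator_commutator_eq_bot_of_rotate h1 h2

lemma lcs_comm_le : ∀ b a : ℕ, ⁅(⊤ : Subgroup (G k)).lowerCentralSeries a, (⊤ : Subgroup (G k)).lowerCentralSeries b⁆ ≤
    (⊤ : Subgroup (G k)).lowerCentralSeries (a + b + 1)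
  | 0, a => le_of_eq rfl
  | (b+1), a => by
      have hm : ⁅(⊤ : Subgroup (G k)).lowerCentralSeries a, (⊤ : Subgroup (G k)).lowerCentralSeries (b+1)⁆ =
          ⁅⁅(⊤ : Subgroup (G k)).lowerCentralSeries b, (⊤ : Subgroup (G k))⁆,
            (⊤ : Subgroup (G k)).lowerCentralSeries a⁆ := by
        rw [Subgroup.commutator_comm]
        rfl
      rw [hm]
      refine three_subgroups ?_ ?_
      · -- ⁅⁅⊤, L a⁆, L b⁆ ≤ L (a+b+2)
        refine le_trans (Subgroup.commutator_mono
          (le_of_eq (Subgroup.commutator_comm _ _)) le_rfl) ?_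
        have h := lcs_comm_le b (a+1)
        have e : (a+1) + b + 1 = a + (b+1) + 1 := by omega
        rw [e] at h
        exact h
      · -- ⁅⁅L a, L b⁆, ⊤⁆ ≤ L (a+b+2)
        refine le_trans (Subgroup.commutator_mono (lcs_comm_le b a) le_rfl) ?_
        exact le_of_eq rfl

lemma DmemL (a b : ℕ) : comm (c k a) (c k b) ∈ (⊤ : Subgroup (G k)).lowerCentralSeries (a+b+1) := by
  rw [comm_eq_commutatorElement]
  exact lcs_comm_le b a (Subgroup.commutator_mem_commutator (inv_mem (cL a)) (inv_mem (cL b)))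

lemma tau_c (i : ℕ) : (x k)⁻¹ * c k i * x k = c k i * c k (i+1) := by
  rw [c_succ]; simp only [comm]; group

lemma Drec (hk : 1 ≤ k) (a b : ℕ) :
    comm (c k (a+1)) (c k b) = comm (c k (a+1)) (c k (b+1)) * comm (c k a) (c k (b+1)) := by
  have w1 : comm (c k a) (c k b) ∈ Wsub k := commH_W hk (cH a) (cH b)
  have w2 : comm (c k a) (c k (b+1)) ∈ Wsub k := commH_W hk (cH a) (cH (b+1))
  have w3 : comm (c k (a+1)) (c k b) ∈ Wsub k := commH_W hk (cH (a+1)) (cH b)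
  have w4 : comm (c k (a+1)) (c k (b+1)) ∈ Wsub k := commH_W hk (cH (a+1)) (cH (b+1))
  have E : comm (c k a * c k (a+1)) (c k b * c k (b+1)) = comm (c k a) (c k b) := by
    rw [← tau_c, ← tau_c, ← conj_comm']
    exact Wconj w1 (x k)
  have e1 : comm (c k a) (c k b * c k (b+1)) =
      comm (c k a) (c k (b+1)) * comm (c k a) (c k b) := by
    have h : comm (c k a) (c k b * c k (b+1)) =
        comm (c k a) (c k (b+1)) * ((c k (b+1))⁻¹ * comm (c k a) (c k b) * c k (b+1)) := by
      simp only [comm]; group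
    rw [h, Wconj w1]
  have e2 : comm (c k (a+1)) (c k b * c k (b+1)) =
      comm (c k (a+1)) (c k (b+1)) * comm (c k (a+1)) (c k b) := by
    have h : comm (c k (a+1)) (c k b * c k (b+1)) =
        comm (c k (a+1)) (c k (b+1)) *
          ((c k (b+1))⁻¹ * comm (c k (a+1)) (c k b) * c k (b+1)) := by
      simp only [comm]; group
    rw [h, Wconj w3]
  have e3 : comm (c k a * c k (a+1)) (c k b * c k (b+1)) =
      comm (c k a) (c k b * c k (b+1)) * comm (c k (a+1)) (c k b * c k (b+1)) := by
    have h : comm (c k a * c k (a+1)) (c k b * c k (b+1)) =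
        (c k (a+1))⁻¹ * comm (c k a) (c k b * c k (b+1)) * c k (a+1) *
          comm (c k (a+1)) (c k b * c k (b+1)) := by
      simp only [comm]; group
    rw [h, e1, Wconj (mul_mem w2 w1)]
  have main : comm (c k a) (c k (b+1)) * comm (c k a) (c k b) *
      (comm (c k (a+1)) (c k (b+1)) * comm (c k (a+1)) (c k b)) = comm (c k a) (c k b) := by
    rw [← e1, ← e2, ← e3, E]
  have h0 : comm (c k a) (c k b) * (comm (c k a) (c k (b+1)) *
      (comm (c k (a+1)) (c k (b+1)) * comm (c k (a+1)) (c k b))) =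
      comm (c k a) (c k b) * 1 := by
    rw [mul_one, ← mul_assoc, ← (Wcomm w2 (comm (c k a) (c k b))).eq]
    exact main
  have h1 : comm (c k a) (c k (b+1)) *
      (comm (c k (a+1)) (c k (b+1)) * comm (c k (a+1)) (c k b)) = 1 := mul_left_cancel h0
  have h2 : comm (c k (a+1)) (c k (b+1)) * comm (c k (a+1)) (c k b) =
      (comm (c k a) (c k (b+1)))⁻¹ := eq_inv_of_mul_eq_one_right h1
  have h3 : comm (c k (a+1)) (c k b) =
      (comm (c k (a+1)) (c k (b+1)))⁻¹ * (comm (c k a) (c k (b+1)))⁻¹ := by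
    rw [← h2]; group
  rw [h3, Winv w4, Winv w2]

lemma tele (hk : 1 ≤ k) : ∀ t a b : ℕ,
    comm (c k (a+t)) (c k b) * (comm (c k a) (c k (b+t)))⁻¹ ∈
      (⊤ : Subgroup (G k)).lowerCentralSeries (a+b+t+2)
  | 0, a, b => by simpa using one_mem _
  | (t+1), a, b => by
      have hrec := Drec hk (a+t) b
      have ih := tele hk t a (b+1)
      have e1 : a+(b+1)+t+2 = a+b+(t+1)+2 := by omega
      have e2 : b+1+t = b+(t+1) := by omega
      rw [e1, e2] at ih
      have hD : comm (c k (a+t+1)) (c k (b+1)) ∈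
          (⊤ : Subgroup (G k)).lowerCentralSeries ((a+t+1)+(b+1)+1) := DmemL _ _
      have e3 : (a+t+1)+(b+1)+1 = a+b+(t+1)+2 := by omega
      rw [e3] at hD
      have hsum : comm (c k (a+t+1)) (c k b) * (comm (c k a) (c k (b+(t+1))))⁻¹ =
          comm (c k (a+t+1)) (c k (b+1)) *
            (comm (c k (a+t)) (c k (b+1)) * (comm (c k a) (c k (b+(t+1))))⁻¹) := by
        rw [hrec, mul_assoc]
      have e4 : a+(t+1) = a+t+1 := rfl
      rw [e4, hsum]
      exact mul_mem hD ih

end Csec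
/-- For every `k ≥ 1` and `i ≥ 1`, `[y,x,…(i)…,x]^2` lies in
`[H_k,H_k] ∩ γ_(2i+1)(G_k)`, and is congruent to `[y,x,…(2i−1)…,x,y]` modulo
`γ_(2i+2)(G_k)`. -/
theorem stmt6 (k : ℕ) (hk : 1 ≤ k) (i : ℕ) (hi : 1 ≤ i) :
    c k i ^ 2 ∈ ⁅Hsub k, Hsub k⁆ ⊓ gamma k (2 * i + 1) ∧
    c k i ^ 2 * (comm (c k (2 * i - 1)) (y k))⁻¹ ∈ gamma k (2 * i + 2) := by
  obtain ⟨j, rfl⟩ : ∃ j, i = j + 1 := ⟨i - 1, by omega⟩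
  have h1 := csq hk j
  constructor
  · rw [Subgroup.mem_inf]
    constructor
    · rw [h1.1]; exact commH_mem_commutator (cH (j+1)) (cH j)
    · show c k (j+1) ^ 2 ∈ (⊤ : Subgroup (G k)).lowerCentralSeries (2*(j+1)+1-1)
      have e : 2*(j+1)+1-1 = (j+1)+j+1 := by omega
      rw [e, h1.1]
      exact DmemL (j+1) j
  · show c k (j+1) ^ 2 * (comm (c k (2*(j+1)-1)) (y k))⁻¹ ∈
      (⊤ : Subgroup (G k)).lowerCentralSeries (2*(j+1)+2-1)
    have e : 2*(j+1)-1 = 2*j+1 := by omega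
    rw [e, h1.1]
    have htel := tele hk j (j+1) 0
    have e2 : j+1+j = 2*j+1 := by omega
    have e3 : (0:ℕ)+j = j := by omega
    rw [e2, e3] at htel
    have e4 : 2*j+1+2 = 2*(j+1)+2-1 := by omega
    rw [e4] at htel
    have hinv : comm (c k (j+1)) (c k j) * (comm (c k (2*j+1)) (c k 0))⁻¹ =
        (comm (c k (2*j+1)) (c k 0) * (comm (c k (j+1)) (c k j))⁻¹)⁻¹ := by group
    show comm (c k (j+1)) (c k j) * (comm (c k (2*j+1)) (c k 0))⁻¹ ∈ _
    rw [hinv]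
    exact inv_mem htel

end P2G
end

section
/- For every integer k ≥ 1 and every i ≥ 3, the element x^(2^(i−1)) is central in G_k modulo γ_(i+1)(G_k); that is, [x^(2^(i−1)), g] ∈ γ_(i+1)(G_k) for every g ∈ G_k. -/
open Subgroup

namespace P2G

/-! ### Auxiliary lemmas -/

section Identities

variable {M : Type*} [Group M]

lemma comm_eq_one_of_eq {a b : M} (h : a * b = b * a) : comm a b = 1 := by
  simp only [comm]
  rw [mul_assoc, h, ← mul_assoc]; group

lemma commute_of_comm {a b : M} (h : comm a b = 1) : a * b = b * a := by
  calc a * b = b * a * (a⁻¹ * b⁻¹ * a * b) := by group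
    _ = b * a := by rw [show a⁻¹ * b⁻¹ * a * b = (1:M) from h, mul_one]

lemma comm_mul (u g h : M) : comm u (g * h) = comm u h * (h⁻¹ * comm u g * h) := by
  simp only [comm]; group

lemma comm_inv (u g : M) : comm u g⁻¹ = g * (comm u g)⁻¹ * g⁻¹ := by
  simp only [comm]; group

lemma comm_one (u : M) : comm u 1 = 1 := by simp [comm]

lemma sq_mul_comm {b c : M} (h : b ^ 2 = c ^ 2) :
    (b⁻¹ * c) ^ 2 = (comm (b⁻¹ * c) c)⁻¹ := by
  have hb : c * c = b * b := by rw [← pow_two, ← pow_two, h]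
  have e : (b⁻¹*c)^2 * comm (b⁻¹*c) c = b⁻¹ * b⁻¹ * (c * c) := by
    simp only [comm, pow_two]; group
  refine eq_inv_of_mul_eq_one_left ?_
  rw [e, hb]; group

/-- The doubling identity, a pure group identity. -/
lemma step_identity (u w : M) (j n : ℤ) :
    (u ^ (-(j+n+n)) * w * u ^ (j+n+n))⁻¹ * (u ^ (-j) * w * u ^ j) =
      ((u ^ (-(j+n)) * w * u ^ (j+n))⁻¹ * (u ^ (-j) * w * u ^ j))^2 *
      (((u ^ (-(j+n)) * w * u ^ (j+n))⁻¹ * (u ^ (-j) * w * u ^ j))⁻¹ *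
        comm ((u ^ (-(j+n)) * w * u ^ (j+n))⁻¹ * (u ^ (-j) * w * u ^ j)) (u ^ n) *
        ((u ^ (-(j+n)) * w * u ^ (j+n))⁻¹ * (u ^ (-j) * w * u ^ j))) := by
  simp only [comm, pow_two]; group

end Identities

section LCS

variable {k : ℕ}

lemma comm_mem_succ {n : ℕ} {a : G k} (ha : a ∈ (⊤ : Subgroup (G k)).lowerCentralSeries n) (c : G k) :
    comm a c ∈ (⊤ : Subgroup (G k)).lowerCentralSeries (n + 1) := by
  rw [Subgroup.lowerCentralSeries_succ]
  exact Subgroup.subset_closure ⟨a⁻¹, inv_mem ha, c⁻¹, Subgroup.mem_top _, by simp [comm, commutatorElement_def]⟩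

lemma conj_mem_lcs {n : ℕ} {a : G k} (ha : a ∈ (⊤ : Subgroup (G k)).lowerCentralSeries n) (g : G k) :
    g * a * g⁻¹ ∈ (⊤ : Subgroup (G k)).lowerCentralSeries n :=
  (lowerCentralSeries_normal (⊤ : Subgroup (G k)) n).conj_mem a ha g

end LCS

lemma y2x_rel (k : ℕ) : comm (y k ^ 2) (x k) = 1 := by
  have hmem : comm (Y ^ 2) X ∈ rels k := Set.mem_union_left _ (by simp)
  have h1 : PresentedGroup.mk (rels k) (comm (Y ^ 2) X) = 1 :=
    (QuotientGroup.eq_one_iff _).2 (Subgroup.subset_normalClosure hmem)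
  simpa [comm, map_mul, map_inv, map_pow, X, Y, x, y, PresentedGroup.of] using h1

lemma yg_sq (k : ℕ) (j : ℤ) : yg k j ^ 2 = y k ^ 2 := by
  have hc : y k ^ 2 * x k = x k * y k ^ 2 := commute_of_comm (y2x_rel k)
  have hcz : y k ^ 2 * x k ^ j = x k ^ j * y k ^ 2 := (Commute.zpow_right hc j).eq
  have e1 : yg k j ^ 2 = x k ^ (-j) * (y k ^ 2 * x k ^ j) := by
    simp only [yg, pow_two]; group
  rw [e1, hcz, ← mul_assoc, zpow_neg, inv_mul_cancel, one_mul]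

/-- Key lemma: `y_(j+2^m)⁻¹ y_j ∈ γ_(m+2) = lowerCentralSeries (m+1)`. -/
lemma key (k : ℕ) : ∀ m : ℕ, ∀ j : ℤ,
    (yg k (j + 2 ^ m))⁻¹ * yg k j ∈ (⊤ : Subgroup (G k)).lowerCentralSeries (m + 1) := by
  intro m
  induction m with
  | zero =>
    intro j
    have h1 : comm (x k) (y k) ∈ (⊤ : Subgroup (G k)).lowerCentralSeries 1 :=
      comm_mem_succ (Subgroup.mem_top _) _
    have h2 : x k ^ (-j) * comm (x k) (y k) * (x k ^ (-j))⁻¹ ∈ (⊤ : Subgroup (G k)).lowerCentralSeries 1 :=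
      conj_mem_lcs h1 _
    have e : (yg k (j + 2 ^ 0))⁻¹ * yg k j
        = x k ^ (-j) * comm (x k) (y k) * (x k ^ (-j))⁻¹ := by
      simp only [yg, comm, pow_zero]; group
    rw [e]; exact h2
  | succ m ih =>
    intro j
    set n : ℤ := 2 ^ m with hn
    have ha : (yg k (j + n))⁻¹ * yg k j ∈ (⊤ : Subgroup (G k)).lowerCentralSeries (m + 1) := ih j
    set a : G k := (yg k (j + n))⁻¹ * yg k j with hadef
    have hb2 : yg k (j + n) ^ 2 = yg k j ^ 2 := by rw [yg_sq, yg_sq]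
    have hsq : a ^ 2 = (comm a (yg k j))⁻¹ := by
      have := sq_mul_comm (M := G k) (b := yg k (j + n)) (c := yg k j) hb2
      simpa [hadef, yg] using this
    have hid : (yg k (j + 2 ^ (m + 1)))⁻¹ * yg k j
        = a ^ 2 * (a⁻¹ * comm a (x k ^ n) * a) := by
      have h2 : j + 2 ^ (m + 1) = j + n + n := by rw [hn]; ring
      rw [h2, hadef]
      simp only [yg]
      exact step_identity (x k) (y k) j n
    rw [hid, hsq]
    refine mul_mem (inv_mem (comm_mem_succ ha _)) ?_
    have := conj_mem_lcs (comm_mem_succ ha (x k ^ n)) a⁻¹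
    simpa using this


/-- For every `k ≥ 1` and every `i ≥ 3`, the element `x^(2^(i−1))` is central
in `G_k` modulo `γ_(i+1)(G_k)`: `[x^(2^(i−1)), g] ∈ γ_(i+1)(G_k)` for every `g ∈ G_k`. -/
theorem stmt14 (k : ℕ) (hk : 1 ≤ k) (i : ℕ) (hi : 3 ≤ i) (g : G k) :
    comm (x k ^ 2 ^ (i - 1)) g ∈ gamma k (i + 1) := by
  obtain ⟨m, rfl⟩ : ∃ m, i = m + 1 := ⟨i - 1, by omega⟩
  show comm (x k ^ 2 ^ m) g ∈ (⊤ : Subgroup (G k)).lowerCentralSeries (m + 1)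
  -- the two generators satisfy the claim
  have hxgen : comm (x k ^ 2 ^ m) (x k) ∈ (⊤ : Subgroup (G k)).lowerCentralSeries (m + 1) := by
    have e : comm (x k ^ 2 ^ m) (x k) = 1 := by simp only [comm]; group
    rw [e]; exact one_mem _
  have hygen : comm (x k ^ 2 ^ m) (y k) ∈ (⊤ : Subgroup (G k)).lowerCentralSeries (m + 1) := by
    have hc : ((2 : ℤ) ^ m) = ((2 ^ m : ℕ) : ℤ) := by push_cast; ring
    have e : comm (x k ^ (2 ^ m : ℕ)) (y k) = (yg k (0 + 2 ^ m))⁻¹ * yg k 0 := by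
      rw [← zpow_natCast (x k) (2 ^ m : ℕ), ← hc]
      simp only [yg, comm, zero_add]
      group
    rw [e]; exact key k m 0
  -- closure properties of the predicate
  have hmul : ∀ g h : G k,
      comm (x k ^ 2 ^ m) g ∈ (⊤ : Subgroup (G k)).lowerCentralSeries (m + 1) →
      comm (x k ^ 2 ^ m) h ∈ (⊤ : Subgroup (G k)).lowerCentralSeries (m + 1) →
      comm (x k ^ 2 ^ m) (g * h) ∈ (⊤ : Subgroup (G k)).lowerCentralSeries (m + 1) := by
    intro g h hg hh
    rw [comm_mul]
    refine mul_mem hh ?_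
    simpa using conj_mem_lcs hg h⁻¹
  have hinv : ∀ g : G k,
      comm (x k ^ 2 ^ m) g ∈ (⊤ : Subgroup (G k)).lowerCentralSeries (m + 1) →
      comm (x k ^ 2 ^ m) g⁻¹ ∈ (⊤ : Subgroup (G k)).lowerCentralSeries (m + 1) := by
    intro g hg
    rw [comm_inv]
    exact conj_mem_lcs (inv_mem hg) g
  -- induct over the presented group
  refine QuotientGroup.induction_on g ?_
  intro w
  show comm (x k ^ 2 ^ m) (PresentedGroup.mk (rels k) w) ∈ (⊤ : Subgroup (G k)).lowerCentralSeries (m + 1)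
  induction w using FreeGroup.induction_on with
  | C1 =>
    rw [map_one, comm_one]
    exact one_mem _
  | of a =>
    fin_cases a
    · exact hxgen
    · exact hygen
  | inv_of a ha =>
    rw [map_inv]
    exact hinv _ ha
  | mul v w hv hw =>
    rw [map_mul]
    exact hmul _ _ hv hw

end P2G
end
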